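/- Let V be a finite-dimensional real inner product space, W a normed space, b : V × W → ℝ a bilinear form satisfying β‖w‖_W ≤ sup_{v ∈ V \ {0}} b(v,w)/‖v‖_V for all w ∈ W. Let Z = {v ∈ V : b(v,w) = 0 ∀ w ∈ W} and Z⊥ its orthogonal complement in V. Then for every w ∈ Z⊥, β‖w‖_V ≤ sup_{(q) ∈ W \ {0}} b(w,q)/‖q‖_W. -/
import Mathlib

open RealInnerProductSpace

/-- inf-sup implies dual inf-sup on the orthogonal complement of the kernel
(Brenner–Scott Lemma 12.5.10). -/
theorem stmt_8 {V W : Type*} [NormedAddCommGroup V] [InnerProductSpace ℝ V]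
    [FiniteDimensional ℝ V] [NormedAddCommGroup W] [NormedSpace ℝ W]
    (b : V →ₗ[ℝ] W →ₗ[ℝ] ℝ) (β : ℝ) (hβ : 0 < β)
    (hinfsup : ∀ w : W, β * ‖w‖ ≤ ⨆ v : {v : V // v ≠ 0}, b v.1 w / ‖v.1‖) :
    ∀ w : V, w ∈ (⨅ μ : W, LinearMap.ker (b.flip μ))ᗮ →
      β * ‖w‖ ≤ ⨆ q : {q : W // q ≠ 0}, b w q.1 / ‖q.1‖ := by
  -- W is finite-dimensional since b.flip is injective into the dual of V
  have hinj : Function.Injective b.flip := by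
    rw [← LinearMap.ker_eq_bot, Submodule.eq_bot_iff]
    intro q hq
    have h0 : ∀ v : V, b v q = 0 := fun v => by simpa using LinearMap.congr_fun hq v
    by_contra hq0
    have h1 := hinfsup q
    have hsup : (⨆ v : {v : V // v ≠ 0}, b v.1 q / ‖v.1‖) ≤ 0 :=
      Real.iSup_le (fun v => by simp [h0]) le_rfl
    have hqn : 0 < ‖q‖ := norm_pos_iff.mpr hq0
    nlinarith
  haveI : FiniteDimensional ℝ W := FiniteDimensional.of_injective b.flip hinj
  -- The "transpose" map T : W → V with ⟪T q, v⟫ = b v q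
  set toFun : W → V :=
    fun q => (InnerProductSpace.toDual ℝ V).symm ((b.flip q).toContinuousLinearMap) with htoFun
  have hT : ∀ q v, ⟪toFun q, v⟫ = b v q := by
    intro q v
    simp [htoFun, InnerProductSpace.toDual_symm_apply]
  have Tadd : ∀ q q', toFun (q + q') = toFun q + toFun q' := by
    intro q q'
    apply ext_inner_right ℝ
    intro v
    rw [inner_add_left, hT, hT, hT, map_add]
  have Tsmul : ∀ (c : ℝ) q, toFun (c • q) = c • toFun q := by
    intro c q
    apply ext_inner_right ℝ
    intro v
    rw [real_inner_smul_left, hT, hT, map_smul, smul_eq_mul]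
  let T : W →ₗ[ℝ] V := ⟨⟨toFun, Tadd⟩, Tsmul⟩
  have hTapp : ∀ q v, ⟪T q, v⟫ = b v q := hT
  -- The kernel Z is the orthogonal complement of range T
  have hZ : (⨅ μ : W, LinearMap.ker (b.flip μ)) = (LinearMap.range T)ᗮ := by
    ext v
    simp only [Submodule.mem_iInf, LinearMap.mem_ker, LinearMap.flip_apply,
      Submodule.mem_orthogonal]
    constructor
    · rintro h u ⟨q, rfl⟩
      rw [hTapp]; exact h q
    · intro h q
      rw [← hTapp]
      exact h (T q) ⟨q, rfl⟩
  intro w hw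
  rw [hZ, Submodule.orthogonal_orthogonal] at hw
  obtain ⟨q, hq⟩ := hw
  by_cases hw0 : w = 0
  · subst hw0
    have hz : ∀ p : {p : W // p ≠ 0}, b (0 : V) p.1 / ‖p.1‖ = 0 := by
      intro p; simp
    rcases isEmpty_or_nonempty {p : W // p ≠ 0} with h | h
    · simp [Real.iSup_of_isEmpty]
    · rw [show (⨆ p : {p : W // p ≠ 0}, b (0 : V) p.1 / ‖p.1‖) = 0 by
        rw [funext hz]; exact ciSup_const]
      simp
  -- main case
  have hwn : 0 < ‖w‖ := norm_pos_iff.mpr hw0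
  have hq0 : q ≠ 0 := by
    rintro rfl
    rw [map_zero] at hq
    exact hw0 hq.symm
  have hqn : 0 < ‖q‖ := norm_pos_iff.mpr hq0
  -- bound ‖q‖ ≤ ‖w‖ / β
  have hb1 : β * ‖q‖ ≤ ‖w‖ := by
    refine le_trans (hinfsup q) (Real.iSup_le (fun v => ?_) (norm_nonneg w))
    have hvn : 0 < ‖v.1‖ := norm_pos_iff.mpr v.2
    rw [← hTapp, hq, div_le_iff₀ hvn]
    calc ⟪w, v.1⟫ ≤ ‖w‖ * ‖v.1‖ := real_inner_le_norm w v.1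
      _ = ‖w‖ * ‖v.1‖ := rfl
  -- the target sup is bounded above
  have hbdd : BddAbove (Set.range fun p : {p : W // p ≠ 0} => b w p.1 / ‖p.1‖) := by
    refine ⟨‖(b w).toContinuousLinearMap‖, ?_⟩
    rintro x ⟨p, rfl⟩
    have hpn : 0 < ‖p.1‖ := norm_pos_iff.mpr p.2
    rw [div_le_iff₀ hpn]
    calc b w p.1 = (b w).toContinuousLinearMap p.1 := rfl
      _ ≤ ‖(b w).toContinuousLinearMap p.1‖ := le_abs_self _
      _ ≤ ‖(b w).toContinuousLinearMap‖ * ‖p.1‖ := (b w).toContinuousLinearMap.le_opNorm p.1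
  have hle := le_ciSup hbdd (⟨q, hq0⟩ : {p : W // p ≠ 0})
  have hval : b w q = ‖w‖ ^ 2 := by
    rw [← hTapp, hq, real_inner_self_eq_norm_sq]
  refine le_trans ?_ hle
  rw [hval, le_div_iff₀ hqn]
  nlinarith
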